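/- Let C, D be small categories, Z a discrete category, s : C → Z a functor with C homotopically discrete and the discretization γ : C → Z (so Z = C^d). Then the inclusion (id, section) functor C ×_{C} D = D → C ×_{Z} D induced by a section of γ is an equivalence of categories whenever the induced Segal map μ̂_2 : C ×_{C} D → C ×_{Z} D is an equivalence; consequently, in a weakly globular double category X, the composite c ∘ ν_2 ∘ (σ_0, id) : X_0 ×_{X_0^d} X_1 → X_1 is an equivalence of categories, where c is the composition X_1 ×_{X_0} X_1 → X_1 and σ_0 the degeneracy. -/

import Mathlib

/-!
STATEMENT 11: Part 1: let `C` be homotopically discrete with discretization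
`γ : C ⥤ Z = Discrete (p C)`, let `F : D ⥤ C`, and let `ι` be a section of `γ`.  Then
the inclusion functor `D = C ×_C D ⥤ C ×_Z D` induced by the section (i.e.
`d ↦ (ι γ F d, d)`) is an equivalence of categories whenever the induced Segal map
`μ̂₂ : C ×_C D = D → C ×_Z D, d ↦ (F d, d)` is an equivalence.

Part 2 ("consequently"): in a weakly globular double category `X`, the composite
`c ∘ ν₂ ∘ (σ₀, id) : X₀ ×_{X₀ᵈ} X₁ ⥤ X₁` is an equivalence of categories, where `c` is
the composition `X₁ ×_{X₀} X₁ ⥤ X₁` (satisfying the unit law `c(σ₀ ∂₁, id) = id`), `σ₀`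
the degeneracy, and `ν₂` the pseudo-inverse (with `ν₂ μ̂₂ = id`) of the induced Segal map
`μ̂₂ : X₁ ×_{X₀} X₁ ⥤ X₁ ×_{X₀ᵈ} X₁`, which is an equivalence.
-/

open CategoryTheory

universe v v' u

/-- Isomorphism classes of objects. -/
def pSet (C : Type u) [Category.{v} C] : Type u :=
  Quotient (CategoryTheory.isIsomorphicSetoid C)

/-- Strict pullback over a discrete base. -/
structure DPb {X Y : Type u} [Category.{v} X] [Category.{v'} Y] {S : Type u}
    (F : X ⥤ Discrete S) (G : Y ⥤ Discrete S) : Type u where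
  left : X
  right : Y
  w : F.obj left = G.obj right

namespace DPb

variable {X Y : Type u} [Category.{v} X] [Category.{v'} Y] {S : Type u}
  {F : X ⥤ Discrete S} {G : Y ⥤ Discrete S}

instance : Category (DPb F G) where
  Hom a b := (a.left ⟶ b.left) × (a.right ⟶ b.right)
  id _ := ⟨𝟙 _, 𝟙 _⟩
  comp f g := ⟨f.1 ≫ g.1, f.2 ≫ g.2⟩
  id_comp f := by dsimp; simp
  comp_id f := by dsimp; simp
  assoc f g h := by dsimp; simp

end DPb

section

variable {C₀ C₁ : Type u} [Category.{v} C₀] [Category.{v} C₁]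

/-- The strict fiber product `X₁ ×_{X₀} X₁` of composable pairs. -/
structure Chain2 (d₀ d₁ : C₁ ⥤ C₀) : Type max u v where
  f : C₁
  g : C₁
  w : d₀.obj f = d₁.obj g

variable (d₀ d₁ : C₁ ⥤ C₀)

instance : Category (Chain2 d₀ d₁) where
  Hom x y := {p : (x.f ⟶ y.f) × (x.g ⟶ y.g) //
    d₀.map p.1 = eqToHom x.w ≫ d₁.map p.2 ≫ eqToHom y.w.symm}
  id x := ⟨⟨𝟙 _, 𝟙 _⟩, by simp⟩
  comp p q := ⟨⟨p.1.1 ≫ q.1.1, p.1.2 ≫ q.1.2⟩, by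
    rw [Functor.map_comp, Functor.map_comp, p.2, q.2]; simp⟩
  id_comp f := by apply Subtype.ext; dsimp; simp
  comp_id f := by apply Subtype.ext; dsimp; simp
  assoc f g h := by apply Subtype.ext; dsimp; simp

variable (γ : C₀ ⥤ Discrete (pSet C₀))

/-- The induced Segal map `μ̂₂ : X₁ ×_{X₀} X₁ ⥤ X₁ ×_{X₀ᵈ} X₁`. -/
def Mu2 : Chain2 d₀ d₁ ⥤ DPb (d₀ ⋙ γ) (d₁ ⋙ γ) where
  obj z := ⟨z.f, z.g, congrArg γ.obj z.w⟩
  map p := ⟨p.1.1, p.1.2⟩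

variable (σ₀ : C₀ ⥤ C₁) (hσ₀ : σ₀ ⋙ d₀ = 𝟭 C₀) (hσ₁ : σ₀ ⋙ d₁ = 𝟭 C₀)

/-- The functor `(σ₀ ∂₁, id) : X₁ = X₀ ×_{X₀} X₁ ⥤ X₁ ×_{X₀} X₁`. -/
def unitL : C₁ ⥤ Chain2 d₀ d₁ where
  obj f := ⟨σ₀.obj (d₁.obj f), f, Functor.congr_obj hσ₀ (d₁.obj f)⟩
  map φ := ⟨⟨σ₀.map (d₁.map φ), φ⟩,
    Functor.congr_hom
      (show (d₁ ⋙ σ₀) ⋙ d₀ = d₁ from by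
        calc (d₁ ⋙ σ₀) ⋙ d₀ = d₁ ⋙ (σ₀ ⋙ d₀) := rfl
          _ = d₁ ⋙ 𝟭 C₀ := by rw [hσ₀]
          _ = d₁ := d₁.comp_id) φ⟩
  map_id f := Subtype.ext (Prod.ext (by dsimp; rw [d₁.map_id, σ₀.map_id]; rfl) rfl)
  map_comp φ ψ := Subtype.ext (Prod.ext (by dsimp; rw [d₁.map_comp, σ₀.map_comp]; rfl) rfl)

/-- The functor `(σ₀, id) : X₀ ×_{X₀ᵈ} X₁ ⥤ X₁ ×_{X₀ᵈ} X₁`. -/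
def inclSigma : DPb γ (d₁ ⋙ γ) ⥤ DPb (d₀ ⋙ γ) (d₁ ⋙ γ) where
  obj a := ⟨σ₀.obj a.left, a.right,
    (congrArg γ.obj (Functor.congr_obj hσ₀ a.left)).trans a.w⟩
  map f := ⟨σ₀.map f.1, f.2⟩
  map_id _ := Prod.ext (σ₀.map_id _) rfl
  map_comp _ _ := Prod.ext (σ₀.map_comp _ _) rfl

end

section Part1

variable {C₀ D : Type u} [Category.{v} C₀] [Category.{v} D]
  (γ : C₀ ⥤ Discrete (pSet C₀)) (F : D ⥤ C₀)

/-- The canonical functor `D = C ×_C D ⥤ C ×_Z D`, `d ↦ (F d, d)` (the induced Segal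
map). -/
def MuD : D ⥤ DPb γ (F ⋙ γ) where
  obj d := ⟨F.obj d, d, rfl⟩
  map g := ⟨F.map g, g⟩
  map_id _ := Prod.ext (F.map_id _) rfl
  map_comp _ _ := Prod.ext (F.map_comp _ _) rfl

/-- The inclusion `D ⥤ C ×_Z D` induced by a section `ι` of `γ`:
`d ↦ (ι γ F d, d)`. -/
def inclD (ι : Discrete (pSet C₀) ⥤ C₀) (hι : ι ⋙ γ = 𝟭 (Discrete (pSet C₀))) :
    D ⥤ DPb γ (F ⋙ γ) where
  obj d := ⟨ι.obj (γ.obj (F.obj d)), d, Functor.congr_obj hι (γ.obj (F.obj d))⟩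
  map g := ⟨ι.map (γ.map (F.map g)), g⟩
  map_id _ := Prod.ext (by dsimp; rw [F.map_id, γ.map_id, ι.map_id]; rfl) rfl
  map_comp _ _ := Prod.ext (by dsimp; rw [F.map_comp, γ.map_comp, ι.map_comp]; rfl) rfl

end Part1


section AuxProof

variable {X Y : Type u} [Category.{v} X] [Category.{v'} Y] {S : Type u}
  {F : X ⥤ Discrete S} {G : Y ⥤ Discrete S}

/-- A componentwise iso gives an iso in `DPb`. -/
def DPb.mkIso {a b : DPb F G} (e : a.left ≅ b.left) (f : a.right ≅ b.right) : a ≅ b where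
  hom := ⟨e.hom, f.hom⟩
  inv := ⟨e.inv, f.inv⟩
  hom_inv_id := Prod.ext (by dsimp [CategoryStruct.comp, CategoryStruct.id]; simp)
    (by dsimp [CategoryStruct.comp, CategoryStruct.id]; simp)
  inv_hom_id := Prod.ext (by dsimp [CategoryStruct.comp, CategoryStruct.id]; simp)
    (by dsimp [CategoryStruct.comp, CategoryStruct.id]; simp)

end AuxProof

theorem stmt_11 {C₀ C₁ D : Type u} [Category.{v} C₀] [Category.{v} C₁] [Category.{v} D]
    -- `X₀` is homotopically discrete, with discretization `γ`
    (hsub : ∀ a b : C₀, Subsingleton (a ⟶ b))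
    (hgrp : ∀ (a b : C₀) (f : a ⟶ b), IsIso f)
    (γ : C₀ ⥤ Discrete (pSet C₀)) (hγ : ∀ x : C₀, γ.obj x = ⟨Quotient.mk _ x⟩)
    -- Part 1 data: a functor `F : D ⥤ C₀` and a section `ι` of `γ`
    (F : D ⥤ C₀) (ι : Discrete (pSet C₀) ⥤ C₀) (hι : ι ⋙ γ = 𝟭 (Discrete (pSet C₀)))
    -- Part 2 data: faces, degeneracy, induced Segal map, its pseudo-inverse, and the
    -- composition `c` with the unit law `c(σ₀ ∂₁, id) = id`
    (d₀ d₁ : C₁ ⥤ C₀) (σ₀ : C₀ ⥤ C₁) (hσ₀ : σ₀ ⋙ d₀ = 𝟭 C₀) (hσ₁ : σ₀ ⋙ d₁ = 𝟭 C₀)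
    (hμeq : (Mu2 d₀ d₁ γ).IsEquivalence)
    (ν₂ : DPb (d₀ ⋙ γ) (d₁ ⋙ γ) ⥤ Chain2 d₀ d₁)
    (hμν : Mu2 d₀ d₁ γ ⋙ ν₂ = 𝟭 (Chain2 d₀ d₁))
    (hνμ : Nonempty (ν₂ ⋙ Mu2 d₀ d₁ γ ≅ 𝟭 (DPb (d₀ ⋙ γ) (d₁ ⋙ γ))))
    (c : Chain2 d₀ d₁ ⥤ C₁) (hunit : unitL d₀ d₁ σ₀ hσ₀ ⋙ c = 𝟭 C₁) :
    -- Part 1: if the induced Segal map `μ̂₂ : D ⥤ C ×_Z D` is an equivalence, then so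
    -- is the inclusion induced by the section `ι`
    ((MuD γ F).IsEquivalence → (inclD γ F ι hι).IsEquivalence) ∧
    -- Part 2: `c ∘ ν₂ ∘ (σ₀, id) : X₀ ×_{X₀ᵈ} X₁ ⥤ X₁` is an equivalence of categories
    (inclSigma d₀ d₁ γ σ₀ hσ₀ ⋙ ν₂ ⋙ c).IsEquivalence := by
  have hsub' : ∀ a b : C₀, Subsingleton (a ⟶ b) := hsub
  -- objects with equal image under γ are isomorphic
  have key : ∀ x y : C₀, γ.obj x = γ.obj y → Nonempty (x ≅ y) := by
    intro x y h
    rw [hγ x, hγ y] at h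
    exact Quotient.exact (congrArg Discrete.as h)
  constructor
  · intro hmu
    -- natural iso MuD ≅ inclD
    have hiso : ∀ d : D, γ.obj (F.obj d) = γ.obj (ι.obj (γ.obj (F.obj d))) :=
      fun d => (Functor.congr_obj hι (γ.obj (F.obj d))).symm
    have e : MuD γ F ≅ inclD γ F ι hι := by
      refine NatIso.ofComponents
        (fun d => DPb.mkIso ((key _ _ (hiso d)).some) (Iso.refl d)) ?_
      intro d d' g
      refine Prod.ext ((hsub _ _).elim _ _) ?_
      show g ≫ 𝟙 d' = 𝟙 d ≫ g
      simp
    exact Functor.isEquivalence_of_iso e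
  · -- MuD γ d₁ is an equivalence
    have hfaithful : (MuD γ d₁).Faithful := ⟨fun {x y} f g h => congrArg Prod.snd h⟩
    have hfull : (MuD γ d₁).Full := ⟨fun {x y} p => ⟨p.2, Prod.ext ((hsub _ _).elim _ _) rfl⟩⟩
    have hess : (MuD γ d₁).EssSurj := by
      constructor
      intro a
      obtain ⟨e⟩ := key a.left (d₁.obj a.right) a.w
      exact ⟨a.right, ⟨DPb.mkIso e.symm (Iso.refl a.right)⟩⟩
    have hmud : (MuD γ d₁).IsEquivalence := ⟨hfaithful, hfull, hess⟩
    -- the key square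
    have eq1 : unitL d₀ d₁ σ₀ hσ₀ ⋙ Mu2 d₀ d₁ γ
        = MuD γ d₁ ⋙ inclSigma d₀ d₁ γ σ₀ hσ₀ := by
      refine CategoryTheory.Functor.ext (fun f => rfl) (fun x y φ => ?_)
      erw [eqToHom_refl, eqToHom_refl, Category.id_comp, Category.comp_id]
      rfl
    have eq2 : MuD γ d₁ ⋙ (inclSigma d₀ d₁ γ σ₀ hσ₀ ⋙ ν₂ ⋙ c) = 𝟭 C₁ := by
      calc MuD γ d₁ ⋙ (inclSigma d₀ d₁ γ σ₀ hσ₀ ⋙ ν₂ ⋙ c)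
          = (MuD γ d₁ ⋙ inclSigma d₀ d₁ γ σ₀ hσ₀) ⋙ ν₂ ⋙ c := rfl
        _ = (unitL d₀ d₁ σ₀ hσ₀ ⋙ Mu2 d₀ d₁ γ) ⋙ ν₂ ⋙ c := by rw [eq1]
        _ = unitL d₀ d₁ σ₀ hσ₀ ⋙ (Mu2 d₀ d₁ γ ⋙ ν₂) ⋙ c := rfl
        _ = unitL d₀ d₁ σ₀ hσ₀ ⋙ 𝟭 _ ⋙ c := by rw [hμν]
        _ = unitL d₀ d₁ σ₀ hσ₀ ⋙ c := rfl
        _ = 𝟭 C₁ := hunit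
    have hcomp : (MuD γ d₁ ⋙ (inclSigma d₀ d₁ γ σ₀ hσ₀ ⋙ ν₂ ⋙ c)).IsEquivalence := by
      rw [eq2]; infer_instance
    exact Functor.isEquivalence_of_comp_left (MuD γ d₁) _
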